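/- Let N ≥ 1 and let n, ñ ≥ 2 be integers. Let A and Ã be N×N matrices over ℂ((t)) such that: A.coeff m = 0 for all m < −n and A.coeff(−n) is non-nilpotent; Ã.coeff m = 0 for all m < −ñ and Ã.coeff(−ñ) is non-nilpotent (i.e. both operators ∂_t + A and ∂_t + Ã are in reduced form). If there exists an invertible N×N matrix g over ℂ((t)) with Ã = g·A·g⁻¹ − g′·g⁻¹, then n = ñ. In other words, two gauge-equivalent reduced operators have the same order of singularity; this is the key claim in the proof that the slope of a connection is well defined (Lemma 2.4 of the paper, in the GL_N case). -/

import Mathlib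

open scoped Classical

/-- The formal derivative of a formal Laurent series: `f′.coeff m = (m+1) • f.coeff (m+1)`. -/
noncomputable def lderiv (f : LaurentSeries ℂ) : LaurentSeries ℂ where
  coeff m := ((m + 1 : ℤ) : ℂ) * f.coeff (m + 1)
  isPWO_support' := by
    have h : (Function.support fun m : ℤ => ((m + 1 : ℤ) : ℂ) * f.coeff (m + 1)) ⊆
        (fun m : ℤ => m - 1) '' f.support := by
      intro m hm
      have : f.coeff (m + 1) ≠ 0 := by
        intro h0
        apply hm
        simp [Function.mem_support, h0]
      exact ⟨m + 1, this, by ring⟩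
    exact (f.isPWO_support.image_of_monotone fun a b hab => by omega).mono h

/-- The matrix of `m`-th coefficients of a matrix of Laurent series. -/
noncomputable def mcoeff {N : ℕ} (A : Matrix (Fin N) (Fin N) (LaurentSeries ℂ)) (m : ℤ) :
    Matrix (Fin N) (Fin N) ℂ :=
  Matrix.of fun i j => (A i j).coeff m

/-- Entrywise formal derivative of a matrix of Laurent series. -/
noncomputable def mderiv {N : ℕ} (A : Matrix (Fin N) (Fin N) (LaurentSeries ℂ)) :
    Matrix (Fin N) (Fin N) (LaurentSeries ℂ) :=
  A.map lderiv

namespace GaugeAux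


lemma lderiv_coeff (f : LaurentSeries ℂ) (m : ℤ) :
    (lderiv f).coeff m = ((m + 1 : ℤ) : ℂ) * f.coeff (m + 1) := rfl

lemma lderiv_add (f g : LaurentSeries ℂ) : lderiv (f + g) = lderiv f + lderiv g := by
  ext m
  simp only [lderiv_coeff, HahnSeries.coeff_add]
  ring

lemma lderiv_zero : lderiv (0 : LaurentSeries ℂ) = 0 := by
  ext m
  simp [lderiv_coeff]

noncomputable def lderivHom : LaurentSeries ℂ →+ LaurentSeries ℂ where
  toFun := lderiv
  map_zero' := lderiv_zero
  map_add' := lderiv_add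

lemma coeff_sum {α : Type*} (s : Finset α) (f : α → LaurentSeries ℂ) (m : ℤ) :
    (∑ j ∈ s, f j).coeff m = ∑ j ∈ s, (f j).coeff m := by
  induction s using Finset.cons_induction with
  | empty => simp
  | cons a s ha ih => rw [Finset.sum_cons, Finset.sum_cons, HahnSeries.coeff_add, ih]

lemma mul_coeff_of_lt {f h : LaurentSeries ℂ} {a b m : ℤ}
    (hf : ∀ k, k < a → f.coeff k = 0) (hh : ∀ k, k < b → h.coeff k = 0)
    (hm : m < a + b) : (f * h).coeff m = 0 := by
  rw [HahnSeries.coeff_mul]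
  refine Finset.sum_eq_zero fun ij hij => ?_
  rw [Finset.mem_addAntidiagonal] at hij
  exfalso
  have h1 : a ≤ ij.1 := by
    by_contra hlt
    exact ((HahnSeries.mem_support _ _).mp hij.1) (hf _ (lt_of_not_ge hlt))
  have h2 : b ≤ ij.2 := by
    by_contra hlt
    exact ((HahnSeries.mem_support _ _).mp hij.2.1) (hh _ (lt_of_not_ge hlt))
  have h3 := hij.2.2
  omega

lemma mul_coeff_lead {f h : LaurentSeries ℂ} {a b : ℤ}
    (hf : ∀ k, k < a → f.coeff k = 0) (hh : ∀ k, k < b → h.coeff k = 0) :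
    (f * h).coeff (a + b) = f.coeff a * h.coeff b := by
  rw [HahnSeries.coeff_mul]
  rw [Finset.sum_eq_single (a, b)]
  · intro ij hij hne
    rw [Finset.mem_addAntidiagonal] at hij
    exfalso
    have h1 : a ≤ ij.1 := by
      by_contra hlt
      exact ((HahnSeries.mem_support _ _).mp hij.1) (hf _ (lt_of_not_ge hlt))
    have h2 : b ≤ ij.2 := by
      by_contra hlt
      exact ((HahnSeries.mem_support _ _).mp hij.2.1) (hh _ (lt_of_not_ge hlt))
    have h3 := hij.2.2
    have : ij.1 = a ∧ ij.2 = b := by omega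
    exact hne (Prod.ext this.1 this.2)
  · intro hnm
    by_cases h1 : f.coeff a = 0
    · rw [h1, zero_mul]
    by_cases h2 : h.coeff b = 0
    · rw [h2, mul_zero]
    exact absurd (Finset.mem_addAntidiagonal.mpr
      ⟨(HahnSeries.mem_support _ _).mpr h1, (HahnSeries.mem_support _ _).mpr h2, rfl⟩) hnm

lemma support_lderiv_subset (f : LaurentSeries ℂ) :
    (lderiv f).support ⊆ (fun m : ℤ => m - 1) '' f.support := by
  intro m hm
  rw [HahnSeries.mem_support] at hm
  have : f.coeff (m + 1) ≠ 0 := by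
    intro h0
    exact hm (by rw [lderiv_coeff, h0, mul_zero])
  exact ⟨m + 1, this, by ring⟩

lemma isPWO_shift (f : LaurentSeries ℂ) :
    ((fun m : ℤ => m - 1) '' f.support).IsPWO :=
  f.isPWO_support.image_of_monotone fun a b hab => by omega

lemma lderiv_mul (f h : LaurentSeries ℂ) :
    lderiv (f * h) = lderiv f * h + f * lderiv h := by
  ext m
  rw [HahnSeries.coeff_add, lderiv_coeff,
    HahnSeries.coeff_mul_left' (isPWO_shift f) (support_lderiv_subset f),
    HahnSeries.coeff_mul_right' (isPWO_shift h) (support_lderiv_subset h),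
    HahnSeries.coeff_mul, Finset.mul_sum]
  have e1 : ∑ ij ∈ Finset.antidiagonal (isPWO_shift f) h.isPWO_support m,
      (lderiv f).coeff ij.1 * h.coeff ij.2
      = ∑ ij ∈ Finset.antidiagonal f.isPWO_support h.isPWO_support (m + 1),
        (ij.1 : ℂ) * (f.coeff ij.1 * h.coeff ij.2) := by
    refine Finset.sum_bij' (fun ij _ => (ij.1 + 1, ij.2)) (fun ij _ => (ij.1 - 1, ij.2))
      ?_ ?_ ?_ ?_ ?_
    · intro ij hij
      rw [Finset.mem_antidiagonal] at hij
      simp only [Finset.mem_antidiagonal]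
      obtain ⟨x, hx, hxe⟩ := hij.1
      have hxe' : x - 1 = ij.1 := hxe
      refine ⟨by rw [show ij.1 + 1 = x by omega]; exact hx, hij.2.1, by omega⟩
    · intro ij hij
      rw [Finset.mem_antidiagonal] at hij
      simp only [Finset.mem_antidiagonal]
      exact ⟨⟨ij.1, hij.1, by simp⟩, hij.2.1, by omega⟩
    · intro ij hij; simp
    · intro ij hij; simp
    · intro ij hij
      rw [lderiv_coeff]
      push_cast
      ring
  have e2 : ∑ ij ∈ Finset.antidiagonal f.isPWO_support (isPWO_shift h) m,
      f.coeff ij.1 * (lderiv h).coeff ij.2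
      = ∑ ij ∈ Finset.antidiagonal f.isPWO_support h.isPWO_support (m + 1),
        (ij.2 : ℂ) * (f.coeff ij.1 * h.coeff ij.2) := by
    refine Finset.sum_bij' (fun ij _ => (ij.1, ij.2 + 1)) (fun ij _ => (ij.1, ij.2 - 1))
      ?_ ?_ ?_ ?_ ?_
    · intro ij hij
      rw [Finset.mem_antidiagonal] at hij
      simp only [Finset.mem_antidiagonal]
      obtain ⟨x, hx, hxe⟩ := hij.2.1
      have hxe' : x - 1 = ij.2 := hxe
      refine ⟨hij.1, by rw [show ij.2 + 1 = x by omega]; exact hx, by omega⟩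
    · intro ij hij
      rw [Finset.mem_antidiagonal] at hij
      simp only [Finset.mem_antidiagonal]
      exact ⟨hij.1, ⟨ij.2, hij.2.1, by simp⟩, by omega⟩
    · intro ij hij; simp
    · intro ij hij; simp
    · intro ij hij
      rw [lderiv_coeff]
      push_cast
      ring
  rw [e1, e2, ← Finset.sum_add_distrib]
  refine Finset.sum_congr rfl fun ij hij => ?_
  rw [Finset.mem_antidiagonal] at hij
  have hsum : (ij.1 : ℂ) + (ij.2 : ℂ) = ((m : ℂ) + 1) := by
    have : ((ij.1 + ij.2 : ℤ) : ℂ) = (((m + 1 : ℤ)) : ℂ) := by rw [hij.2.2]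
    push_cast at this
    exact this
  push_cast
  rw [← hsum]
  ring



variable {N : ℕ}

/-- coefficient of a vector of Laurent series -/
def vcoeff (x : Fin N → LaurentSeries ℂ) (m : ℤ) : Fin N → ℂ := fun i => (x i).coeff m

/-- the operator ∂ + A -/
noncomputable def Dop (A : Matrix (Fin N) (Fin N) (LaurentSeries ℂ))
    (x : Fin N → LaurentSeries ℂ) : Fin N → LaurentSeries ℂ :=
  (fun i => lderiv (x i)) + A.mulVec x

lemma mulVec_apply (A : Matrix (Fin N) (Fin N) (LaurentSeries ℂ))
    (x : Fin N → LaurentSeries ℂ) (i : Fin N) :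
    A.mulVec x i = ∑ j, A i j * x j := rfl

lemma mcoeff_apply (A : Matrix (Fin N) (Fin N) (LaurentSeries ℂ)) (m : ℤ) (i j : Fin N) :
    mcoeff A m i j = (A i j).coeff m := rfl

lemma vcoeff_mulVec_of_lt {A : Matrix (Fin N) (Fin N) (LaurentSeries ℂ)}
    {x : Fin N → LaurentSeries ℂ} {a v : ℤ}
    (hA : ∀ k, k < a → mcoeff A k = 0) (hx : ∀ k, k < v → vcoeff x k = 0) :
    ∀ m, m < a + v → vcoeff (A.mulVec x) m = 0 := by
  intro m hm
  funext i
  show (A.mulVec x i).coeff m = 0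
  rw [mulVec_apply, coeff_sum]
  refine Finset.sum_eq_zero fun j _ => ?_
  refine mul_coeff_of_lt (fun k hk => ?_) (fun k hk => ?_) hm
  · exact congrFun (congrFun (hA k hk) i) j
  · exact congrFun (hx k hk) j

lemma vcoeff_mulVec_lead {A : Matrix (Fin N) (Fin N) (LaurentSeries ℂ)}
    {x : Fin N → LaurentSeries ℂ} {a v : ℤ}
    (hA : ∀ k, k < a → mcoeff A k = 0) (hx : ∀ k, k < v → vcoeff x k = 0) :
    vcoeff (A.mulVec x) (a + v) = (mcoeff A a).mulVec (vcoeff x v) := by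
  funext i
  show (A.mulVec x i).coeff (a + v) = ∑ j, mcoeff A a i j * vcoeff x v j
  rw [mulVec_apply, coeff_sum]
  refine Finset.sum_congr rfl fun j _ => ?_
  exact mul_coeff_lead (fun k hk => congrFun (congrFun (hA k hk) i) j)
    (fun k hk => congrFun (hx k hk) j)

lemma vcoeff_Dop_of_lt {n : ℤ} (hn : 1 ≤ n) {A : Matrix (Fin N) (Fin N) (LaurentSeries ℂ)}
    {x : Fin N → LaurentSeries ℂ} {v : ℤ}
    (hA : ∀ k, k < -n → mcoeff A k = 0) (hx : ∀ k, k < v → vcoeff x k = 0) :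
    ∀ m, m < -n + v → vcoeff (Dop A x) m = 0 := by
  intro m hm
  have h2 := vcoeff_mulVec_of_lt hA hx m hm
  funext i
  show (lderiv (x i)).coeff m + (A.mulVec x i).coeff m = 0
  rw [lderiv_coeff]
  have hx1 : (x i).coeff (m + 1) = 0 := congrFun (hx (m + 1) (by omega)) i
  rw [hx1, mul_zero, zero_add]
  exact congrFun h2 i

lemma vcoeff_Dop_lead {n : ℤ} (hn : 2 ≤ n) {A : Matrix (Fin N) (Fin N) (LaurentSeries ℂ)}
    {x : Fin N → LaurentSeries ℂ} {v : ℤ}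
    (hA : ∀ k, k < -n → mcoeff A k = 0) (hx : ∀ k, k < v → vcoeff x k = 0) :
    vcoeff (Dop A x) (-n + v) = (mcoeff A (-n)).mulVec (vcoeff x v) := by
  have h2 := vcoeff_mulVec_lead hA hx
  funext i
  show (lderiv (x i)).coeff (-n + v) + (A.mulVec x i).coeff (-n + v)
    = (mcoeff A (-n)).mulVec (vcoeff x v) i
  rw [lderiv_coeff]
  have hx1 : (x i).coeff (-n + v + 1) = 0 := congrFun (hx (-n + v + 1) (by omega)) i
  rw [hx1, mul_zero, zero_add]
  exact congrFun h2 i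

lemma iterate_lead {n : ℤ} (hn : 2 ≤ n) {A : Matrix (Fin N) (Fin N) (LaurentSeries ℂ)}
    (hA : ∀ k, k < -n → mcoeff A k = 0)
    {μ : ℂ} {w : Fin N → ℂ} (hw : (mcoeff A (-n)).mulVec w = μ • w) (k : ℕ) :
    (∀ m, m < -(n * k) → vcoeff ((Dop A)^[k] (fun i => HahnSeries.single 0 (w i))) m = 0)
      ∧ vcoeff ((Dop A)^[k] (fun i => HahnSeries.single 0 (w i))) (-(n * k)) = μ ^ k • w := by
  induction k with
  | zero =>
    constructor
    · intro m hm
      funext i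
      show (HahnSeries.single (0 : ℤ) (w i)).coeff m = 0
      refine HahnSeries.coeff_single_of_ne ?_
      simp only [Nat.cast_zero, mul_zero, neg_zero] at hm
      omega
    · funext i
      show (HahnSeries.single (0 : ℤ) (w i)).coeff (-(n * (0 : ℕ))) = (μ ^ 0 • w) i
      simp [HahnSeries.coeff_single_same]
  | succ k ih =>
    have hb : ∀ m, m < -(n * k) → vcoeff ((Dop A)^[k] (fun i => HahnSeries.single 0 (w i))) m = 0 :=
      ih.1
    have harith : -(n * ((k + 1 : ℕ) : ℤ)) = -n + -(n * k) := by push_cast; ring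
    constructor
    · intro m hm
      rw [Function.iterate_succ_apply']
      refine vcoeff_Dop_of_lt (by omega) hA hb m ?_
      omega
    · rw [Function.iterate_succ_apply']
      rw [harith, vcoeff_Dop_lead hn hA hb, ih.2, Matrix.mulVec_smul, hw, smul_smul, ← pow_succ]

lemma exists_bound (hN : 1 ≤ N) (P : Matrix (Fin N) (Fin N) (LaurentSeries ℂ)) :
    ∃ c : ℤ, ∀ k, k < c → mcoeff P k = 0 := by
  have hne : (Finset.univ : Finset (Fin N × Fin N)).Nonempty := by
    refine ⟨(⟨0, hN⟩, ⟨0, hN⟩), Finset.mem_univ _⟩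
  refine ⟨Finset.univ.inf' hne fun p => (P p.1 p.2).order, fun k hk => ?_⟩
  funext i j
  show (P i j).coeff k = 0
  refine HahnSeries.coeff_eq_zero_of_lt_order (lt_of_lt_of_le hk ?_)
  exact Finset.inf'_le _ (Finset.mem_univ (i, j))

lemma exists_eigen {M : Matrix (Fin N) (Fin N) ℂ} (hM : ¬ IsNilpotent M) :
    ∃ (μ : ℂ) (w : Fin N → ℂ), μ ≠ 0 ∧ w ≠ 0 ∧ M.mulVec w = μ • w := by
  set φ : Module.End ℂ (Fin N → ℂ) := Matrix.toLinAlgEquiv' M with hφdef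
  have hφ : ¬ IsNilpotent φ := by
    intro h
    apply hM
    have := h.map (Matrix.toLinAlgEquiv' (R := ℂ) (n := Fin N)).symm
    simpa [hφdef] using this
  have hint : IsIntegral ℂ φ := LinearMap.isIntegral φ
  set p := minpoly ℂ φ with hp
  have hmon : p.Monic := minpoly.monic hint
  have hsplits : p.Splits := IsAlgClosed.splits p
  by_cases hall : ∀ μ ∈ p.roots, μ = 0
  · exfalso
    apply hφ
    have h1 := hsplits.eq_prod_roots_of_monic hmon
    have h2 : (Multiset.map (fun a => Polynomial.X - Polynomial.C a) p.roots).prod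
        = Polynomial.X ^ Multiset.card p.roots := by
      have hmc : Multiset.map (fun a => Polynomial.X - Polynomial.C a) p.roots
          = Multiset.map (fun _ => (Polynomial.X : Polynomial ℂ)) p.roots :=
        Multiset.map_congr rfl fun x hx => by rw [hall x hx]; simp
      rw [hmc, Multiset.map_const', Multiset.prod_replicate]
    have hprod : p = Polynomial.X ^ Multiset.card p.roots := h1.trans h2
    refine ⟨Multiset.card p.roots, ?_⟩
    have haev := minpoly.aeval ℂ φ
    rw [← hp, hprod, map_pow, Polynomial.aeval_X] at haev
    exact haev
  · push_neg at hall
    obtain ⟨μ, hμmem, hμ⟩ := hall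
    have hroot : p.IsRoot μ := by
      have hp0 : p ≠ 0 := minpoly.ne_zero hint
      exact (Polynomial.mem_roots hp0).mp hμmem
    have hev : φ.HasEigenvalue μ := Module.End.hasEigenvalue_of_isRoot hroot
    obtain ⟨w, hwv⟩ := hev.exists_hasEigenvector
    refine ⟨μ, w, hμ, hwv.2, ?_⟩
    have := hwv.apply_eq_smul
    rw [hφdef] at this
    simpa using this

lemma lderiv_mulVec (P : Matrix (Fin N) (Fin N) (LaurentSeries ℂ)) (x : Fin N → LaurentSeries ℂ) :
    (fun i => lderiv (P.mulVec x i)) = (mderiv P).mulVec x + P.mulVec (fun i => lderiv (x i)) := by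
  funext i
  show lderiv (P.mulVec x i)
    = (mderiv P).mulVec x i + P.mulVec (fun i => lderiv (x i)) i
  rw [mulVec_apply, show lderiv (∑ j, P i j * x j) = lderivHom (∑ j, P i j * x j) from rfl,
    map_sum, mulVec_apply, mulVec_apply, ← Finset.sum_add_distrib]
  refine Finset.sum_congr rfl fun j _ => ?_
  show lderiv (P i j * x j) = mderiv P i j * x j + P i j * lderiv (x j)
  rw [lderiv_mul]
  rfl

lemma intertwine {A A' P : Matrix (Fin N) (Fin N) (LaurentSeries ℂ)}
    (hPA : A' * P = P * A - mderiv P) (x : Fin N → LaurentSeries ℂ) :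
    Dop A' (P.mulVec x) = P.mulVec (Dop A x) := by
  show (fun i => lderiv (P.mulVec x i)) + A'.mulVec (P.mulVec x) = _
  rw [lderiv_mulVec, Matrix.mulVec_mulVec, hPA, Matrix.sub_mulVec]
  show _ = P.mulVec ((fun i => lderiv (x i)) + A.mulVec x)
  rw [Matrix.mulVec_add, ← Matrix.mulVec_mulVec]
  abel

lemma le_of_gauge (hN : 1 ≤ N) {n n' : ℤ} (hn : 2 ≤ n) (hn' : 2 ≤ n')
    {A A' P Q : Matrix (Fin N) (Fin N) (LaurentSeries ℂ)}
    (hA : ∀ m, m < -n → mcoeff A m = 0) (hAnn : ¬ IsNilpotent (mcoeff A (-n)))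
    (hA' : ∀ m, m < -n' → mcoeff A' m = 0)
    (hQP : Q * P = 1)
    (hint : ∀ x, Dop A' (P.mulVec x) = P.mulVec (Dop A x)) : n ≤ n' := by
  obtain ⟨μ, w, hμ, hw, heig⟩ := exists_eigen hAnn
  obtain ⟨cP, hcP⟩ := exists_bound hN P
  obtain ⟨cQ, hcQ⟩ := exists_bound hN Q
  set x₀ : Fin N → LaurentSeries ℂ := fun i => HahnSeries.single 0 (w i) with hx₀def
  have hx₀ : ∀ k, k < (0 : ℤ) → vcoeff x₀ k = 0 := by
    intro k hk
    funext i
    exact HahnSeries.coeff_single_of_ne (by omega)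
  have key := iterate_lead hn hA heig
  have hz : ∀ k : ℕ, (Dop A')^[k] (P.mulVec x₀) = P.mulVec ((Dop A)^[k] x₀) := by
    intro k
    induction k with
    | zero => rfl
    | succ k ih =>
      rw [Function.iterate_succ_apply', ih, hint]
      rw [Function.iterate_succ_apply']
  have hzb : ∀ k : ℕ, ∀ m, m < cP - n' * k → vcoeff ((Dop A')^[k] (P.mulVec x₀)) m = 0 := by
    intro k
    induction k with
    | zero =>
      intro m hm
      refine vcoeff_mulVec_of_lt hcP hx₀ m ?_
      push_cast at hm
      omega
    | succ k ih =>
      intro m hm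
      have harith : cP - n' * ((k + 1 : ℕ) : ℤ) = -n' + (cP - n' * k) := by push_cast; ring
      rw [Function.iterate_succ_apply']
      exact vcoeff_Dop_of_lt (by omega) hA' ih m (by omega)
  have hyb : ∀ k : ℕ, ∀ m, m < cQ + (cP - n' * k) → vcoeff ((Dop A)^[k] x₀) m = 0 := by
    intro k m hm
    have hrec : (Dop A)^[k] x₀ = Q.mulVec ((Dop A')^[k] (P.mulVec x₀)) := by
      rw [hz, Matrix.mulVec_mulVec, hQP, Matrix.one_mulVec]
    rw [hrec]
    exact vcoeff_mulVec_of_lt hcQ (hzb k) m hm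
  by_contra hlt
  push_neg at hlt
  set k : ℕ := (cQ + cP).natAbs + 1 with hkdef
  have hkpos : (0 : ℤ) ≤ (k : ℤ) := Int.natCast_nonneg k
  have h2 := mul_le_mul_of_nonneg_right (show n' + 1 ≤ n by omega) hkpos
  have hknat : -(k : ℤ) < cQ + cP := by
    have : ((cQ + cP).natAbs : ℤ) = (cQ + cP).natAbs := rfl
    omega
  have hineq : -(n * k) < cQ + (cP - n' * k) := by nlinarith
  have h0 := hyb k (-(n * k)) hineq
  have hlead := (key k).2
  rw [h0] at hlead
  have : μ ^ k • w = 0 := hlead.symm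
  rcases smul_eq_zero.mp this with h | h
  · exact pow_ne_zero k hμ h
  · exact hw h


end GaugeAux

/-- Two gauge-equivalent operators in reduced form (order of singularity `≥ 2`,
non-nilpotent polar part) have the same order of singularity. This is the key
claim in the proof that the slope of a connection is well defined. -/
theorem reduced_forms_same_order
    (N : ℕ) (hN : 1 ≤ N) (n n' : ℤ) (hn : 2 ≤ n) (hn' : 2 ≤ n')
    (A A' : Matrix (Fin N) (Fin N) (LaurentSeries ℂ))
    (hA : ∀ m : ℤ, m < -n → mcoeff A m = 0)
    (hAnonnilp : ¬ IsNilpotent (mcoeff A (-n)))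
    (hA' : ∀ m : ℤ, m < -n' → mcoeff A' m = 0)
    (hA'nonnilp : ¬ IsNilpotent (mcoeff A' (-n')))
    (g : Matrix (Fin N) (Fin N) (LaurentSeries ℂ)) (hg : IsUnit g)
    (hgauge : A' = g * A * g⁻¹ - (mderiv g) * g⁻¹) :
    n = n' := by
  have hdet : IsUnit g.det := (Matrix.isUnit_iff_isUnit_det g).mp hg
  have h1 : g * g⁻¹ = 1 := Matrix.mul_nonsing_inv g hdet
  have h2 : g⁻¹ * g = 1 := Matrix.nonsing_inv_mul g hdet
  have hPA : A' * g = g * A - mderiv g := by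
    rw [hgauge, sub_mul, mul_assoc (g * A) g⁻¹ g, h2, mul_one, mul_assoc (mderiv g) g⁻¹ g, h2,
      mul_one]
  have hintf : ∀ x, GaugeAux.Dop A' (g.mulVec x) = g.mulVec (GaugeAux.Dop A x) :=
    GaugeAux.intertwine hPA
  have hintr : ∀ z, GaugeAux.Dop A (g⁻¹.mulVec z) = g⁻¹.mulVec (GaugeAux.Dop A' z) := by
    intro z
    have hx := hintf (g⁻¹.mulVec z)
    have hgg : g.mulVec (g⁻¹.mulVec z) = z := by
      rw [Matrix.mulVec_mulVec, h1, Matrix.one_mulVec]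
    rw [hgg] at hx
    rw [hx, Matrix.mulVec_mulVec, h2, Matrix.one_mulVec]
  have hle : n ≤ n' := GaugeAux.le_of_gauge hN hn hn' hA hAnonnilp hA' h2 hintf
  have hge : n' ≤ n := GaugeAux.le_of_gauge hN hn' hn hA' hA'nonnilp hA h1 hintr
  omega
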